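/- Let M be an additive abelian group, let S be a submonoid of M that is semisaturated in M, and let v ∈ S. Then the submonoid S + ℤv := {s + n•v : s ∈ S, n ∈ ℤ} is semisaturated in M. -/
import Mathlib


/-- If `S` is a semisaturated submonoid of an additive abelian group `M` and
`v ∈ S`, then the submonoid `S + ℤv` is semisaturated in `M`. -/
theorem add_zmultiples_semisaturated {M : Type*} [AddCommGroup M]
    (S : AddSubmonoid M)
    (hsemi : ∀ m : M, 2 • m ∈ S → 3 • m ∈ S → m ∈ S)
    (v : M) (hv : v ∈ S)
    (T : Set M) (hT : T = {m : M | ∃ s ∈ S, ∃ n : ℤ, m = s + n • v}) :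
    ∀ m : M, 2 • m ∈ T → 3 • m ∈ T → m ∈ T := by
  subst hT
  rintro m ⟨s₁, hs₁, n₁, h1⟩ ⟨s₂, hs₂, n₂, h2⟩
  have hpos : ∀ j : ℤ, 0 ≤ j → j • v ∈ S := by
    intro j hj
    lift j to ℕ using hj
    simpa [natCast_zsmul] using S.nsmul_mem hv j
  have cast2 : ∀ x : M, (2 : ℕ) • x = (2 : ℤ) • x := fun x => by
    rw [← natCast_zsmul]; norm_num
  have cast3 : ∀ x : M, (3 : ℕ) • x = (3 : ℤ) • x := fun x => by
    rw [← natCast_zsmul]; norm_num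
  set k : ℤ := -(n₁.natAbs + n₂.natAbs) with hk
  have h1' : (2 : ℤ) • m = s₁ + n₁ • v := by rw [← cast2]; exact h1
  have h2' : (3 : ℤ) • m = s₂ + n₂ • v := by rw [← cast3]; exact h2
  have e1 : 2 • (m - k • v) = s₁ + (n₁ - 2 * k) • v := by
    rw [cast2, smul_sub, smul_smul, sub_smul, h1']
    abel_nf
  have e2 : 3 • (m - k • v) = s₂ + (n₂ - 3 * k) • v := by
    rw [cast3, smul_sub, smul_smul, sub_smul, h2']
    abel_nf
  have hm' : m - k • v ∈ S := by
    apply hsemi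
    · rw [e1]; exact S.add_mem hs₁ (hpos _ (by omega))
    · rw [e2]; exact S.add_mem hs₂ (hpos _ (by omega))
  exact ⟨m - k • v, hm', k, by abel⟩
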